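/- Let L be a complete lattice satisfying the modular law. Then L satisfies condition (2) of strict modularity: for all b, c ∈ L and every subset A ⊆ L such that every element of L(A) is ≤ c, one has L(U(L(A) ∪ {b}) ∪ {c}) = L(U(L(A) ∪ L(b,c))). -/
import Mathlib

lemma lb_eq_Iic {L : Type*} [CompleteLattice L] (S : Set L) :
    lowerBounds S = Set.Iic (sInf S) :=
  Set.ext fun w => ⟨fun h => le_sInf h, fun h x hx => h.trans (sInf_le hx)⟩

lemma ub_eq_Ici {L : Type*} [CompleteLattice L] (S : Set L) :
    upperBounds S = Set.Ici (sSup S) :=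
  Set.ext fun w => ⟨fun h => sSup_le h, fun h x hx => (le_sSup hx).trans h⟩

lemma mysSup_Iic {L : Type*} [CompleteLattice L] (a : L) : sSup (Set.Iic a) = a :=
  le_antisymm (sSup_le fun _ hx => hx) (le_sSup le_rfl)

lemma mysInf_Ici {L : Type*} [CompleteLattice L] (a : L) : sInf (Set.Ici a) = a :=
  le_antisymm (sInf_le le_rfl) (le_sInf fun _ hx => hx)

/-- A complete modular lattice satisfies condition (2) of strict
modularity. -/
theorem stmt_6 {L : Type*} [CompleteLattice L]
    (hmod : ∀ x y z : L, x ≤ z → (x ⊔ y) ⊓ z = x ⊔ (y ⊓ z)) :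
    ∀ (b c : L) (A : Set L), (∀ w ∈ lowerBounds A, w ≤ c) →
      lowerBounds (upperBounds (lowerBounds A ∪ {b}) ∪ {c}) =
        lowerBounds (upperBounds (lowerBounds A ∪ lowerBounds {b, c})) := by
  intro b c A hc
  have ha : sInf A ≤ c := hc _ (fun x hx => sInf_le hx)
  rw [lb_eq_Iic A, lb_eq_Iic ({b, c} : Set L)]
  rw [ub_eq_Ici, ub_eq_Ici, lb_eq_Iic, lb_eq_Iic]
  simp only [sSup_union, mysSup_Iic, sSup_singleton, sInf_union, mysInf_Ici,
    sInf_singleton, sInf_pair]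
  rw [hmod _ _ _ ha]
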